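/- If a flow is (b, r)-token-bucket constrained and a cyclic scheduler with cycle length T and per-cycle capacity c ≥ r·T admits at most c bits per cycle, then the backlog of the flow's unserved bits never exceeds b: i.e., for all n, Σ_{k<n} a_k - Σ_{k<n} d_k ≤ b, where a_k are arrivals and d_k = min(backlog + a_k, c) are departures in cycle k. -/

import Mathlib

theorem stmt12 (b r T c : ℝ) (hb : 0 ≤ b) (hr : 0 ≤ r) (hT : 0 < T) (hc : r * T ≤ c)
    (a : ℕ → ℝ) (ha : ∀ k, 0 ≤ a k)
    (htb : ∀ m n : ℕ, m ≤ n →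
      ∑ k ∈ Finset.Ico m n, a k ≤ b + r * ((n : ℝ) - (m : ℝ)) * T)
    (B d : ℕ → ℝ)
    (hB0 : B 0 = 0)
    (hd : ∀ k, d k = min (B k + a k) c)
    (hBk : ∀ k, B (k + 1) = B k + a k - d k) :
    ∀ n, (∑ k ∈ Finset.range n, a k) - (∑ k ∈ Finset.range n, d k) ≤ b := by
  -- First: Σa - Σd = B n
  have hsum : ∀ n, (∑ k ∈ Finset.range n, a k) - (∑ k ∈ Finset.range n, d k) = B n := by
    intro n
    induction n with
    | zero => simp [hB0]
    | succ n ih =>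
      rw [Finset.sum_range_succ, Finset.sum_range_succ, hBk n]
      linarith
  -- Second: B n = Σ_{Ico m n} a - c*(n-m) for some m ≤ n
  have hrep : ∀ n, ∃ m ≤ n, B n = (∑ k ∈ Finset.Ico m n, a k) - c * ((n : ℝ) - m) := by
    intro n
    induction n with
    | zero => exact ⟨0, le_refl 0, by simp [hB0]⟩
    | succ n ih =>
      obtain ⟨m, hm, hBn⟩ := ih
      have hstep : B (n + 1) = B n + a n - min (B n + a n) c := by rw [hBk n, hd n]
      rcases le_total (B n + a n) c with h | h
      · refine ⟨n + 1, le_refl _, ?_⟩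
        rw [hstep, min_eq_left h]
        simp
      · refine ⟨m, hm.trans (Nat.le_succ n), ?_⟩
        rw [hstep, min_eq_right h, Finset.sum_Ico_succ_top hm, hBn]
        push_cast
        ring
    -- Conclude
  intro n
  rw [hsum n]
  obtain ⟨m, hm, hBn⟩ := hrep n
  have h1 := htb m n hm
  have hnm : (0 : ℝ) ≤ (n : ℝ) - m := by
    have : (m : ℝ) ≤ (n : ℝ) := Nat.cast_le.mpr hm
    linarith
  have h2 : r * ((n : ℝ) - m) * T ≤ c * ((n : ℝ) - m) := by
    have : r * T * ((n : ℝ) - m) ≤ c * ((n : ℝ) - m) :=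
      mul_le_mul_of_nonneg_right hc hnm
    linarith [this]
  linarith
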